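/- Let K be a function assigning a natural number to every triple of partitions such that: (i) K is invariant under conjugating any two of its three arguments, i.e. K(λ,μ,ν) = K(λ',μ',ν) = K(λ',μ,ν') = K(λ,μ',ν') for all partitions λ, μ, ν of the same weight; and (ii) K(λ,μ,ν) ≤ K(λ⊕(1,1), μ⊕(1,1), ν⊕(1,1)) for all partitions λ, μ, ν of the same weight. Let λ, μ, ν be nonempty partitions of the same weight, let d₁, d₂, d₃, d be integers, and suppose that for every (a,b,c,m) ∈ Dom(d₁,d₂,d₃,d), writing A = λ⊕(m−a,a), B = μ⊕(m−b,b), C = ν⊕(m−c,c), each of the four triples (A,B,C), (A',B',C), (A',B,C'), (A,B',C') is K-stable, meaning K(T₁,T₂,T₃) = K(T₁⊕(1,0), T₂⊕(1,0), T₃⊕(1,0)). Then the function (a,b,c,m) ↦ K(λ⊕(m−a,a), μ⊕(m−b,b), ν⊕(m−c,c)) is constant on Dom(d₁,d₂,d₃,d). -/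

import Mathlib

/-- A list of naturals is a partition if it is weakly decreasing and all parts are positive. -/
def IsPartition (l : List ℕ) : Prop :=
  l.Pairwise (· ≥ ·) ∧ ∀ x ∈ l, 0 < x

/-- `opPQ l p q` is the partition `l ⊕ (p, q)`: add `p` to the first part and
append `q` parts equal to `1`. -/
def opPQ (l : List ℕ) (p q : ℕ) : List ℕ :=
  (l.headD 0 + p) :: (l.tail ++ List.replicate q 1)

/-- The conjugate (transpose) partition: its `i`-th part (for `0 ≤ i < max part`)
is the number of parts of `l` that are greater than `i`. -/
def conjP (l : List ℕ) : List ℕ :=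
  (List.range (l.foldr max 0)).map (fun i => (l.filter (fun x => decide (i < x))).length)

/-- `Dom d₁ d₂ d₃ d` is the set of quadruples `(a,b,c,m)` of natural numbers with
`-a + b + c ≥ d₁`, `a - b + c ≥ d₂`, `a + b - c ≥ d₃`, `2m - (a + b + c) ≥ 2d`
(read in `ℤ`), and `m ≥ a`, `m ≥ b`, `m ≥ c`. -/
def Dom (d₁ d₂ d₃ d : ℤ) : Set (ℕ × ℕ × ℕ × ℕ) :=
  {x | d₁ ≤ -(x.1 : ℤ) + x.2.1 + x.2.2.1 ∧
       d₂ ≤ (x.1 : ℤ) - x.2.1 + x.2.2.1 ∧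
       d₃ ≤ (x.1 : ℤ) + x.2.1 - x.2.2.1 ∧
       2 * d ≤ 2 * (x.2.2.2 : ℤ) - ((x.1 : ℤ) + x.2.1 + x.2.2.1) ∧
       x.1 ≤ x.2.2.2 ∧ x.2.1 ≤ x.2.2.2 ∧ x.2.2.1 ≤ x.2.2.2}

/-- A triple `(T₁, T₂, T₃)` is `K`-stable if `K` does not change when one adds one box to
the first row of each of the three partitions. -/
def KStable (K : List ℕ → List ℕ → List ℕ → ℕ) (T₁ T₂ T₃ : List ℕ) : Prop :=
  K T₁ T₂ T₃ = K (opPQ T₁ 1 0) (opPQ T₂ 1 0) (opPQ T₃ 1 0)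

lemma foldr_max_le {B : ℕ} {w : List ℕ} (h : ∀ x ∈ w, x ≤ B) : w.foldr max 0 ≤ B := by
  induction w with
  | nil => simp
  | cons a t ih =>
    simp only [List.foldr_cons]
    exact max_le (h a (by simp)) (ih fun x hx => h x (List.mem_cons_of_mem _ hx))

lemma exists_gt_of_lt_foldr_max {i : ℕ} {w : List ℕ} (h : i < w.foldr max 0) :
    ∃ x ∈ w, i < x := by
  induction w with
  | nil => simp at h
  | cons a t ih =>
    simp only [List.foldr_cons, lt_max_iff] at h
    rcases h with h | h
    · exact ⟨a, by simp, h⟩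
    · obtain ⟨x, hx, hx2⟩ := ih h
      exact ⟨x, by simp [hx], hx2⟩

lemma le_foldr_max {x : ℕ} {w : List ℕ} (h : x ∈ w) : x ≤ w.foldr max 0 := by
  induction w with
  | nil => simp at h
  | cons a t ih =>
    simp only [List.foldr_cons, le_max_iff]
    rcases List.mem_cons.1 h with rfl | h
    · exact Or.inl le_rfl
    · exact Or.inr (ih h)

lemma opPQ_opPQ (l : List ℕ) (p q r s : ℕ) :
    opPQ (opPQ l p q) r s = opPQ l (p + r) (q + s) := by
  simp only [opPQ, List.headD_cons, List.tail_cons, List.append_assoc,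
    List.replicate_add, add_assoc]

lemma isPartition_opPQ {l : List ℕ} (hl : IsPartition l) (hne : l ≠ []) (p q : ℕ) :
    IsPartition (opPQ l p q) := by
  obtain ⟨h, t, rfl⟩ := List.exists_cons_of_ne_nil hne
  obtain ⟨hs, hpos⟩ := hl
  rw [List.pairwise_cons] at hs
  have hh : 1 ≤ h := hpos h (by simp)
  simp only [opPQ, List.headD_cons, List.tail_cons]
  constructor
  · rw [List.pairwise_cons]
    constructor
    · intro b hb
      rcases List.mem_append.1 hb with hb | hb
      · exact le_trans (hs.1 b hb) (by omega)
      · have := List.eq_of_mem_replicate hb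
        omega
    · rw [List.pairwise_append]
      refine ⟨hs.2, by simp [List.pairwise_replicate], ?_⟩
      intro a ha b hb
      have hb1 := List.eq_of_mem_replicate hb
      have := hpos a (by simp [ha])
      omega
  · intro x hx
    rcases List.mem_cons.1 hx with rfl | hx
    · omega
    · rcases List.mem_append.1 hx with hx | hx
      · exact hpos x (by simp [hx])
      · have := List.eq_of_mem_replicate hx; omega

lemma sum_opPQ {l : List ℕ} (hne : l ≠ []) (p q : ℕ) :
    (opPQ l p q).sum = l.sum + p + q := by
  obtain ⟨h, t, rfl⟩ := List.exists_cons_of_ne_nil hne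
  simp [opPQ, List.sum_replicate]
  omega

lemma isPartition_conjP (w : List ℕ) : IsPartition (conjP w) := by
  constructor
  · rw [conjP, List.pairwise_map]
    refine (List.pairwise_lt_range (n := _)).imp ?_
    intro i j hij
    simp only [ge_iff_le, ← List.countP_eq_length_filter]
    exact List.countP_mono_left fun x hx h => by
      simp only [decide_eq_true_eq] at *; omega
  · intro x hx
    simp only [conjP, List.mem_map, List.mem_range] at hx
    obtain ⟨i, hi, rfl⟩ := hx
    obtain ⟨y, hy, hy2⟩ := exists_gt_of_lt_foldr_max hi
    rw [← List.countP_eq_length_filter]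
    exact List.countP_pos_iff.2 ⟨y, hy, by simp [hy2]⟩

lemma list_sum_range (M : ℕ) (f : ℕ → ℕ) :
    ((List.range M).map f).sum = ∑ i ∈ Finset.range M, f i := by
  induction M with
  | zero => simp
  | succ M ih =>
    rw [List.range_succ, Finset.sum_range_succ, List.map_append, List.sum_append, ih]
    simp

lemma sum_filter_aux (x M : ℕ) : (∑ i ∈ Finset.range M, if i < x then 1 else 0) = min x M := by
  induction M with
  | zero => simp
  | succ M ih =>
    rw [Finset.sum_range_succ, ih]
    split <;> omega

lemma sum_conjP_aux (M : ℕ) (w : List ℕ) :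
    (∑ i ∈ Finset.range M, (w.filter (fun x => decide (i < x))).length)
      = (w.map (fun x => min x M)).sum := by
  induction w with
  | nil => simp
  | cons a t ih =>
    simp only [List.filter_cons, List.map_cons, List.sum_cons]
    rw [← ih, ← sum_filter_aux a M, ← Finset.sum_add_distrib]
    refine Finset.sum_congr rfl fun i _ => ?_
    by_cases h : i < a <;> simp [h] <;> omega

lemma sum_conjP (w : List ℕ) : (conjP w).sum = w.sum := by
  rw [conjP, list_sum_range, sum_conjP_aux]
  have : w.map (fun x => min x (w.foldr max 0)) = w.map id :=
    List.map_congr_left fun x hx => min_eq_left (le_foldr_max hx)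
  rw [this, List.map_id]

lemma foldr_max_opPQ {l : List ℕ} (hl : IsPartition l) (hne : l ≠ []) (p q : ℕ) :
    (opPQ l p q).foldr max 0 = l.headD 0 + p := by
  obtain ⟨h, t, rfl⟩ := List.exists_cons_of_ne_nil hne
  obtain ⟨hs, hpos⟩ := hl
  rw [List.pairwise_cons] at hs
  have hh : 1 ≤ h := hpos h (by simp)
  simp only [opPQ, List.headD_cons, List.tail_cons, List.foldr_cons]
  have : (t ++ List.replicate q 1).foldr max 0 ≤ h + p := by
    refine foldr_max_le ?_
    intro x hx
    rcases List.mem_append.1 hx with hx | hx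
    · have := hs.1 x hx; omega
    · have := List.eq_of_mem_replicate hx; omega
  omega

lemma opPQ_snoc_one (l : List ℕ) (p q : ℕ) :
    opPQ l p (q + 1) = opPQ l p q ++ [1] := by
  simp [opPQ, List.replicate_succ', ← List.append_assoc]

lemma conjP_opPQ_succ {l : List ℕ} (hl : IsPartition l) (hne : l ≠ []) (p q : ℕ) :
    conjP (opPQ l p (q + 1)) = opPQ (conjP (opPQ l p q)) 1 0 := by
  have hh : 1 ≤ l.headD 0 := by
    obtain ⟨h, t, rfl⟩ := List.exists_cons_of_ne_nil hne
    exact hl.2 h (by simp)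
  have hmu : (opPQ l p q).foldr max 0 = l.headD 0 + p := foldr_max_opPQ hl hne p q
  have hmv : (opPQ l p (q + 1)).foldr max 0 = l.headD 0 + p := foldr_max_opPQ hl hne p (q + 1)
  have hv : opPQ l p (q + 1) = opPQ l p q ++ [1] := opPQ_snoc_one l p q
  set u := opPQ l p q with hu
  have hK : l.headD 0 + p = (l.headD 0 + p - 1) + 1 := by omega
  rw [conjP, conjP, hmu, hmv, hv, hK, List.range_succ_eq_map, List.map_cons, List.map_cons]
  rw [opPQ, List.headD_cons, List.tail_cons, List.replicate_zero, List.append_nil]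
  congr 1
  · -- head : count of (0 < ·) in u ++ [1] = count in u + 1
    rw [List.filter_append]
    simp
  · rw [List.map_map, List.map_map]
    refine List.map_congr_left fun i _ => ?_
    simp only [Function.comp_apply, List.filter_append]
    have : List.filter (fun x => decide (Nat.succ i < x)) [1] = [] := by
      simp [Nat.succ_eq_add_one]
    rw [this, List.append_nil]

lemma mem_Dom {d₁ d₂ d₃ d : ℤ} {a b c mm : ℕ} :
    (a, b, c, mm) ∈ Dom d₁ d₂ d₃ d ↔
      (d₁ ≤ -(a : ℤ) + b + c ∧ d₂ ≤ (a : ℤ) - b + c ∧ d₃ ≤ (a : ℤ) + b - c ∧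
       2 * d ≤ 2 * (mm : ℤ) - ((a : ℤ) + b + c) ∧ a ≤ mm ∧ b ≤ mm ∧ c ≤ mm) := Iff.rfl

lemma abstract_const (F : ℕ × ℕ × ℕ × ℕ → ℕ) (d₁ d₂ d₃ d : ℤ)
    (h0 : ∀ a b c mm : ℕ, (a, b, c, mm) ∈ Dom d₁ d₂ d₃ d →
      F (a, b, c, mm) = F (a, b, c, mm + 1))
    (h1 : ∀ a b c mm : ℕ, (a, b, c, mm) ∈ Dom d₁ d₂ d₃ d →
      F (a, b, c, mm) = F (a + 1, b + 1, c, mm + 1))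
    (h2 : ∀ a b c mm : ℕ, (a, b, c, mm) ∈ Dom d₁ d₂ d₃ d →
      F (a, b, c, mm) = F (a + 1, b, c + 1, mm + 1))
    (h3 : ∀ a b c mm : ℕ, (a, b, c, mm) ∈ Dom d₁ d₂ d₃ d →
      F (a, b, c, mm) = F (a, b + 1, c + 1, mm + 1))
    (h4 : ∀ a b c mm : ℕ, (a, b, c, mm) ∈ Dom d₁ d₂ d₃ d →
      F (a, b, c, mm) ≤ F (a + 1, b + 1, c + 1, mm + 2)) :
    ∀ a b c mm a' b' c' mm' : ℕ, (a, b, c, mm) ∈ Dom d₁ d₂ d₃ d →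
      (a', b', c', mm') ∈ Dom d₁ d₂ d₃ d →
      F (a, b, c, mm) = F (a', b', c', mm') := by
  have mem0 : ∀ a b c mm : ℕ, (a, b, c, mm) ∈ Dom d₁ d₂ d₃ d →
      (a, b, c, mm + 1) ∈ Dom d₁ d₂ d₃ d := by
    intro a b c mm h; rw [mem_Dom] at *; push_cast at *; omega
  have mem1 : ∀ a b c mm : ℕ, (a, b, c, mm) ∈ Dom d₁ d₂ d₃ d →
      (a + 1, b + 1, c, mm + 1) ∈ Dom d₁ d₂ d₃ d := by
    intro a b c mm h; rw [mem_Dom] at *; push_cast at *; omega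
  have mem2 : ∀ a b c mm : ℕ, (a, b, c, mm) ∈ Dom d₁ d₂ d₃ d →
      (a + 1, b, c + 1, mm + 1) ∈ Dom d₁ d₂ d₃ d := by
    intro a b c mm h; rw [mem_Dom] at *; push_cast at *; omega
  have mem3 : ∀ a b c mm : ℕ, (a, b, c, mm) ∈ Dom d₁ d₂ d₃ d →
      (a, b + 1, c + 1, mm + 1) ∈ Dom d₁ d₂ d₃ d := by
    intro a b c mm h; rw [mem_Dom] at *; push_cast at *; omega
  have mem4 : ∀ a b c mm : ℕ, (a, b, c, mm) ∈ Dom d₁ d₂ d₃ d →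
      (a + 1, b + 1, c + 1, mm + 2) ∈ Dom d₁ d₂ d₃ d := by
    intro a b c mm h; rw [mem_Dom] at *; push_cast at *; omega
  have iter0 : ∀ k a b c mm : ℕ, (a, b, c, mm) ∈ Dom d₁ d₂ d₃ d →
      (a, b, c, mm + k) ∈ Dom d₁ d₂ d₃ d ∧ F (a, b, c, mm) = F (a, b, c, mm + k) := by
    intro k
    induction k with
    | zero => intro a b c mm h; exact ⟨h, rfl⟩
    | succ k ih =>
      intro a b c mm h
      obtain ⟨h', e⟩ := ih a b c (mm + 1) (mem0 a b c mm h)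
      have em : mm + 1 + k = mm + (k + 1) := by omega
      rw [em] at h' e
      exact ⟨h', (h0 a b c mm h).trans e⟩
  have iter1 : ∀ k a b c mm : ℕ, (a, b, c, mm) ∈ Dom d₁ d₂ d₃ d →
      (a + k, b + k, c, mm + k) ∈ Dom d₁ d₂ d₃ d ∧
        F (a, b, c, mm) = F (a + k, b + k, c, mm + k) := by
    intro k
    induction k with
    | zero => intro a b c mm h; exact ⟨h, rfl⟩
    | succ k ih =>
      intro a b c mm h
      obtain ⟨h', e⟩ := ih (a + 1) (b + 1) c (mm + 1) (mem1 a b c mm h)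
      have ea : a + 1 + k = a + (k + 1) := by omega
      have eb : b + 1 + k = b + (k + 1) := by omega
      have em : mm + 1 + k = mm + (k + 1) := by omega
      rw [ea, eb, em] at h' e
      exact ⟨h', (h1 a b c mm h).trans e⟩
  have iter2 : ∀ k a b c mm : ℕ, (a, b, c, mm) ∈ Dom d₁ d₂ d₃ d →
      (a + k, b, c + k, mm + k) ∈ Dom d₁ d₂ d₃ d ∧
        F (a, b, c, mm) = F (a + k, b, c + k, mm + k) := by
    intro k
    induction k with
    | zero => intro a b c mm h; exact ⟨h, rfl⟩
    | succ k ih =>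
      intro a b c mm h
      obtain ⟨h', e⟩ := ih (a + 1) b (c + 1) (mm + 1) (mem2 a b c mm h)
      have ea : a + 1 + k = a + (k + 1) := by omega
      have ec : c + 1 + k = c + (k + 1) := by omega
      have em : mm + 1 + k = mm + (k + 1) := by omega
      rw [ea, ec, em] at h' e
      exact ⟨h', (h2 a b c mm h).trans e⟩
  have iter3 : ∀ k a b c mm : ℕ, (a, b, c, mm) ∈ Dom d₁ d₂ d₃ d →
      (a, b + k, c + k, mm + k) ∈ Dom d₁ d₂ d₃ d ∧
        F (a, b, c, mm) = F (a, b + k, c + k, mm + k) := by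
    intro k
    induction k with
    | zero => intro a b c mm h; exact ⟨h, rfl⟩
    | succ k ih =>
      intro a b c mm h
      obtain ⟨h', e⟩ := ih a (b + 1) (c + 1) (mm + 1) (mem3 a b c mm h)
      have eb : b + 1 + k = b + (k + 1) := by omega
      have ec : c + 1 + k = c + (k + 1) := by omega
      have em : mm + 1 + k = mm + (k + 1) := by omega
      rw [eb, ec, em] at h' e
      exact ⟨h', (h3 a b c mm h).trans e⟩
  have reach : ∀ k0 k1 k2 k3 a b c mm : ℕ, (a, b, c, mm) ∈ Dom d₁ d₂ d₃ d →
      F (a, b, c, mm) = F (a + k1 + k2, b + k1 + k3, c + k2 + k3, mm + k0 + k1 + k2 + k3) := by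
    intro k0 k1 k2 k3 a b c mm h
    obtain ⟨ha, e1⟩ := iter1 k1 a b c mm h
    obtain ⟨hb, e2⟩ := iter2 k2 (a + k1) (b + k1) c (mm + k1) ha
    obtain ⟨hc, e3⟩ := iter3 k3 (a + k1 + k2) (b + k1) (c + k2) (mm + k1 + k2) hb
    obtain ⟨hd, e4⟩ := iter0 k0 (a + k1 + k2) (b + k1 + k3) (c + k2 + k3) (mm + k1 + k2 + k3) hc
    have em : mm + k1 + k2 + k3 + k0 = mm + k0 + k1 + k2 + k3 := by omega
    rw [em] at e4
    exact ((e1.trans e2).trans e3).trans e4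
  have sp : ∀ a b c mm a' b' c' mm' : ℕ, (a, b, c, mm) ∈ Dom d₁ d₂ d₃ d →
      (a', b', c', mm') ∈ Dom d₁ d₂ d₃ d → (a + b + c) % 2 = (a' + b' + c') % 2 →
      F (a, b, c, mm) = F (a', b', c', mm') := by
    intro a b c mm a' b' c' mm' hx hy hp
    set M := a + b + c + 2 * (a' + b' + c' + mm + mm') with hM
    obtain ⟨k0, k1, k2, k3, e1, e2, e3, e4⟩ :
        ∃ k0 k1 k2 k3 : ℕ, a + k1 + k2 = M ∧ b + k1 + k3 = M ∧ c + k2 + k3 = M ∧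
          mm + k0 + k1 + k2 + k3 = 2 * M := by
      refine ⟨2 * M - mm - (M + c - a - b) / 2 - (M + b - a - c) / 2 - (M + a - b - c) / 2,
        (M + c - a - b) / 2, (M + b - a - c) / 2, (M + a - b - c) / 2, ?_, ?_, ?_, ?_⟩ <;> omega
    obtain ⟨k0', k1', k2', k3', e1', e2', e3', e4'⟩ :
        ∃ k0 k1 k2 k3 : ℕ, a' + k1 + k2 = M ∧ b' + k1 + k3 = M ∧ c' + k2 + k3 = M ∧
          mm' + k0 + k1 + k2 + k3 = 2 * M := by
      refine ⟨2 * M - mm' - (M + c' - a' - b') / 2 - (M + b' - a' - c') / 2 -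
        (M + a' - b' - c') / 2,
        (M + c' - a' - b') / 2, (M + b' - a' - c') / 2, (M + a' - b' - c') / 2,
        ?_, ?_, ?_, ?_⟩ <;> omega
    have ex := reach k0 k1 k2 k3 a b c mm hx
    rw [e1, e2, e3, e4] at ex
    have ey := reach k0' k1' k2' k3' a' b' c' mm' hy
    rw [e1', e2', e3', e4'] at ey
    exact ex.trans ey.symm
  intro a b c mm a' b' c' mm' hx hy
  by_cases hp : (a + b + c) % 2 = (a' + b' + c') % 2
  · exact sp a b c mm a' b' c' mm' hx hy hp
  · refine le_antisymm ?_ ?_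
    · exact le_of_le_of_eq (h4 a b c mm hx)
        (sp (a + 1) (b + 1) (c + 1) (mm + 2) a' b' c' mm' (mem4 a b c mm hx) hy (by omega))
    · exact le_of_le_of_eq (h4 a' b' c' mm' hy)
        (sp (a' + 1) (b' + 1) (c' + 1) (mm' + 2) a b c mm (mem4 a' b' c' mm' hy) hx (by omega))

lemma opPQ_row (l : List ℕ) {a mm : ℕ} (h : a ≤ mm) :
    opPQ (opPQ l (mm - a) a) 1 0 = opPQ l (mm + 1 - a) a := by
  rw [opPQ_opPQ]
  congr 1 <;> omega

lemma opPQ_box (l : List ℕ) {a mm : ℕ} (h : a ≤ mm) :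
    opPQ (opPQ l (mm - a) a) 1 1 = opPQ l (mm + 2 - (a + 1)) (a + 1) := by
  rw [opPQ_opPQ]
  congr 1 <;> omega

lemma conjP_col {l : List ℕ} (hl : IsPartition l) (hne : l ≠ []) {a mm : ℕ} (h : a ≤ mm) :
    opPQ (conjP (opPQ l (mm - a) a)) 1 0 = conjP (opPQ l (mm + 1 - (a + 1)) (a + 1)) := by
  rw [← conjP_opPQ_succ hl hne (mm - a) a]
  have e : mm - a = mm + 1 - (a + 1) := by omega
  rw [e]

lemma sum_opPQ_sub {l : List ℕ} (hne : l ≠ []) {a mm : ℕ} (h : a ≤ mm) :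
    (opPQ l (mm - a) a).sum = l.sum + mm := by
  rw [sum_opPQ hne]
  omega

/-- If `K` is invariant under conjugating any two of its arguments, satisfies the
monotonicity `K(λ,μ,ν) ≤ K(λ⊕(1,1), μ⊕(1,1), ν⊕(1,1))` of Conjecture 5.10, and for every
`(a,b,c,m) ∈ Dom d₁ d₂ d₃ d` the four triples `(A,B,C)`, `(A',B',C)`, `(A',B,C')`,
`(A,B',C')` with `A = λ⊕(m-a,a)`, `B = μ⊕(m-b,b)`, `C = ν⊕(m-c,c)` are `K`-stable, then
`(a,b,c,m) ↦ K(λ⊕(m-a,a), μ⊕(m-b,b), ν⊕(m-c,c))` is constant on `Dom d₁ d₂ d₃ d`. -/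
theorem constant_on_Dom (K : List ℕ → List ℕ → List ℕ → ℕ)
    (hconj : ∀ l m n : List ℕ, IsPartition l → IsPartition m → IsPartition n →
      l.sum = m.sum → m.sum = n.sum →
      K l m n = K (conjP l) (conjP m) n ∧
      K l m n = K (conjP l) m (conjP n) ∧
      K l m n = K l (conjP m) (conjP n))
    (hmono11 : ∀ l m n : List ℕ, IsPartition l → IsPartition m → IsPartition n →
      l.sum = m.sum → m.sum = n.sum →
      K l m n ≤ K (opPQ l 1 1) (opPQ m 1 1) (opPQ n 1 1))
    (l m n : List ℕ)
    (hl : IsPartition l) (hm : IsPartition m) (hn : IsPartition n)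
    (hlne : l ≠ []) (hmne : m ≠ []) (hnne : n ≠ [])
    (hw₁ : l.sum = m.sum) (hw₂ : m.sum = n.sum)
    (d₁ d₂ d₃ d : ℤ)
    (hstab : ∀ x ∈ Dom d₁ d₂ d₃ d,
      KStable K (opPQ l (x.2.2.2 - x.1) x.1) (opPQ m (x.2.2.2 - x.2.1) x.2.1)
        (opPQ n (x.2.2.2 - x.2.2.1) x.2.2.1) ∧
      KStable K (conjP (opPQ l (x.2.2.2 - x.1) x.1)) (conjP (opPQ m (x.2.2.2 - x.2.1) x.2.1))
        (opPQ n (x.2.2.2 - x.2.2.1) x.2.2.1) ∧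
      KStable K (conjP (opPQ l (x.2.2.2 - x.1) x.1)) (opPQ m (x.2.2.2 - x.2.1) x.2.1)
        (conjP (opPQ n (x.2.2.2 - x.2.2.1) x.2.2.1)) ∧
      KStable K (opPQ l (x.2.2.2 - x.1) x.1) (conjP (opPQ m (x.2.2.2 - x.2.1) x.2.1))
        (conjP (opPQ n (x.2.2.2 - x.2.2.1) x.2.2.1)))
    (x y : ℕ × ℕ × ℕ × ℕ) (hx : x ∈ Dom d₁ d₂ d₃ d) (hy : y ∈ Dom d₁ d₂ d₃ d) :
    K (opPQ l (x.2.2.2 - x.1) x.1) (opPQ m (x.2.2.2 - x.2.1) x.2.1)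
        (opPQ n (x.2.2.2 - x.2.2.1) x.2.2.1) =
      K (opPQ l (y.2.2.2 - y.1) y.1) (opPQ m (y.2.2.2 - y.2.1) y.2.1)
        (opPQ n (y.2.2.2 - y.2.2.1) y.2.2.1) := by
  obtain ⟨a, b, c, mm⟩ := x
  obtain ⟨a', b', c', mm'⟩ := y
  have key : ∀ (p q : ℕ) (w : List ℕ), w ≠ [] → q ≤ p → (opPQ w (p - q) q).sum = w.sum + p :=
    fun p q w hw hqp => sum_opPQ_sub hw hqp
  have hPl : ∀ {q p : ℕ}, q ≤ p → IsPartition (opPQ l (p - q) q) :=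
    fun {q p} _ => isPartition_opPQ hl hlne _ _
  have hPm : ∀ {q p : ℕ}, q ≤ p → IsPartition (opPQ m (p - q) q) :=
    fun {q p} _ => isPartition_opPQ hm hmne _ _
  have hPn : ∀ {q p : ℕ}, q ≤ p → IsPartition (opPQ n (p - q) q) :=
    fun {q p} _ => isPartition_opPQ hn hnne _ _
  have h0' : ∀ a b c mm : ℕ, (a, b, c, mm) ∈ Dom d₁ d₂ d₃ d →
      K (opPQ l (mm - a) a) (opPQ m (mm - b) b) (opPQ n (mm - c) c)
        = K (opPQ l (mm + 1 - a) a) (opPQ m (mm + 1 - b) b) (opPQ n (mm + 1 - c) c) := by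
    intro a b c mm h
    have ha : a ≤ mm := h.2.2.2.2.1
    have hb : b ≤ mm := h.2.2.2.2.2.1
    have hc : c ≤ mm := h.2.2.2.2.2.2
    have hs : K (opPQ l (mm - a) a) (opPQ m (mm - b) b) (opPQ n (mm - c) c)
        = K (opPQ (opPQ l (mm - a) a) 1 0) (opPQ (opPQ m (mm - b) b) 1 0)
            (opPQ (opPQ n (mm - c) c) 1 0) := (hstab (a, b, c, mm) h).1
    rw [hs, opPQ_row l ha, opPQ_row m hb, opPQ_row n hc]
  have hsum3 : ∀ {a b c mm : ℕ}, a ≤ mm → b ≤ mm → c ≤ mm →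
      (opPQ l (mm - a) a).sum = (opPQ m (mm - b) b).sum ∧
      (opPQ m (mm - b) b).sum = (opPQ n (mm - c) c).sum := by
    intro a b c mm ha hb hc
    rw [sum_opPQ_sub hlne ha, sum_opPQ_sub hmne hb, sum_opPQ_sub hnne hc, hw₁, hw₂]
    exact ⟨rfl, rfl⟩
  have h1' : ∀ a b c mm : ℕ, (a, b, c, mm) ∈ Dom d₁ d₂ d₃ d →
      K (opPQ l (mm - a) a) (opPQ m (mm - b) b) (opPQ n (mm - c) c)
        = K (opPQ l (mm + 1 - (a + 1)) (a + 1)) (opPQ m (mm + 1 - (b + 1)) (b + 1))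
            (opPQ n (mm + 1 - c) c) := by
    intro a b c mm h
    have ha : a ≤ mm := h.2.2.2.2.1
    have hb : b ≤ mm := h.2.2.2.2.2.1
    have hc : c ≤ mm := h.2.2.2.2.2.2
    obtain ⟨hsAB, hsBC⟩ := hsum3 ha hb hc
    have step1 := (hconj _ _ _ (hPl ha) (hPm hb) (hPn hc) hsAB hsBC).1
    have step2 : K (conjP (opPQ l (mm - a) a)) (conjP (opPQ m (mm - b) b)) (opPQ n (mm - c) c)
        = K (opPQ (conjP (opPQ l (mm - a) a)) 1 0) (opPQ (conjP (opPQ m (mm - b) b)) 1 0)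
            (opPQ (opPQ n (mm - c) c) 1 0) := (hstab (a, b, c, mm) h).2.1
    have ha1 : a + 1 ≤ mm + 1 := by omega
    have hb1 : b + 1 ≤ mm + 1 := by omega
    have hc1 : c ≤ mm + 1 := by omega
    obtain ⟨hsAB1, hsBC1⟩ := hsum3 ha1 hb1 hc1
    have step4 := (hconj _ _ _ (hPl ha1) (hPm hb1) (hPn hc1) hsAB1 hsBC1).1
    rw [step1, step2, conjP_col hl hlne ha, conjP_col hm hmne hb, opPQ_row n hc, ← step4]
  have h2' : ∀ a b c mm : ℕ, (a, b, c, mm) ∈ Dom d₁ d₂ d₃ d →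
      K (opPQ l (mm - a) a) (opPQ m (mm - b) b) (opPQ n (mm - c) c)
        = K (opPQ l (mm + 1 - (a + 1)) (a + 1)) (opPQ m (mm + 1 - b) b)
            (opPQ n (mm + 1 - (c + 1)) (c + 1)) := by
    intro a b c mm h
    have ha : a ≤ mm := h.2.2.2.2.1
    have hb : b ≤ mm := h.2.2.2.2.2.1
    have hc : c ≤ mm := h.2.2.2.2.2.2
    obtain ⟨hsAB, hsBC⟩ := hsum3 ha hb hc
    have step1 := (hconj _ _ _ (hPl ha) (hPm hb) (hPn hc) hsAB hsBC).2.1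
    have step2 : K (conjP (opPQ l (mm - a) a)) (opPQ m (mm - b) b) (conjP (opPQ n (mm - c) c))
        = K (opPQ (conjP (opPQ l (mm - a) a)) 1 0) (opPQ (opPQ m (mm - b) b) 1 0)
            (opPQ (conjP (opPQ n (mm - c) c)) 1 0) := (hstab (a, b, c, mm) h).2.2.1
    have ha1 : a + 1 ≤ mm + 1 := by omega
    have hb1 : b ≤ mm + 1 := by omega
    have hc1 : c + 1 ≤ mm + 1 := by omega
    obtain ⟨hsAB1, hsBC1⟩ := hsum3 ha1 hb1 hc1
    have step4 := (hconj _ _ _ (hPl ha1) (hPm hb1) (hPn hc1) hsAB1 hsBC1).2.1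
    rw [step1, step2, conjP_col hl hlne ha, conjP_col hn hnne hc, opPQ_row m hb, ← step4]
  have h3' : ∀ a b c mm : ℕ, (a, b, c, mm) ∈ Dom d₁ d₂ d₃ d →
      K (opPQ l (mm - a) a) (opPQ m (mm - b) b) (opPQ n (mm - c) c)
        = K (opPQ l (mm + 1 - a) a) (opPQ m (mm + 1 - (b + 1)) (b + 1))
            (opPQ n (mm + 1 - (c + 1)) (c + 1)) := by
    intro a b c mm h
    have ha : a ≤ mm := h.2.2.2.2.1
    have hb : b ≤ mm := h.2.2.2.2.2.1
    have hc : c ≤ mm := h.2.2.2.2.2.2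
    obtain ⟨hsAB, hsBC⟩ := hsum3 ha hb hc
    have step1 := (hconj _ _ _ (hPl ha) (hPm hb) (hPn hc) hsAB hsBC).2.2
    have step2 : K (opPQ l (mm - a) a) (conjP (opPQ m (mm - b) b)) (conjP (opPQ n (mm - c) c))
        = K (opPQ (opPQ l (mm - a) a) 1 0) (opPQ (conjP (opPQ m (mm - b) b)) 1 0)
            (opPQ (conjP (opPQ n (mm - c) c)) 1 0) := (hstab (a, b, c, mm) h).2.2.2
    have ha1 : a ≤ mm + 1 := by omega
    have hb1 : b + 1 ≤ mm + 1 := by omega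
    have hc1 : c + 1 ≤ mm + 1 := by omega
    obtain ⟨hsAB1, hsBC1⟩ := hsum3 ha1 hb1 hc1
    have step4 := (hconj _ _ _ (hPl ha1) (hPm hb1) (hPn hc1) hsAB1 hsBC1).2.2
    rw [step1, step2, conjP_col hm hmne hb, conjP_col hn hnne hc, opPQ_row l ha, ← step4]
  have h4' : ∀ a b c mm : ℕ, (a, b, c, mm) ∈ Dom d₁ d₂ d₃ d →
      K (opPQ l (mm - a) a) (opPQ m (mm - b) b) (opPQ n (mm - c) c)
        ≤ K (opPQ l (mm + 2 - (a + 1)) (a + 1)) (opPQ m (mm + 2 - (b + 1)) (b + 1))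
            (opPQ n (mm + 2 - (c + 1)) (c + 1)) := by
    intro a b c mm h
    have ha : a ≤ mm := h.2.2.2.2.1
    have hb : b ≤ mm := h.2.2.2.2.2.1
    have hc : c ≤ mm := h.2.2.2.2.2.2
    obtain ⟨hsAB, hsBC⟩ := hsum3 ha hb hc
    have := hmono11 _ _ _ (hPl ha) (hPm hb) (hPn hc) hsAB hsBC
    rwa [opPQ_box l ha, opPQ_box m hb, opPQ_box n hc] at this
  exact abstract_const
    (fun z => K (opPQ l (z.2.2.2 - z.1) z.1) (opPQ m (z.2.2.2 - z.2.1) z.2.1)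
      (opPQ n (z.2.2.2 - z.2.2.1) z.2.2.1)) d₁ d₂ d₃ d h0' h1' h2' h3' h4'
    a b c mm a' b' c' mm' hx hy
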